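/- If A ∈ 𝔹ℂ^{n×n} and B ∈ 𝔹ℂ^{m×m} are hyperbolic positive bicomplex matrices, then their bicomplex tensor product A ⊗ⱼ B ∈ 𝔹ℂ^{nm×nm} is hyperbolic positive. -/

import Mathlib

open Complex Matrix Kronecker BigOperators

open scoped ComplexOrder

/-- Bicomplex numbers, modeled as pairs `(z₁, z₂) ∈ ℂ × ℂ` representing `z₁ + j z₂`.
Addition is the componentwise (Prod) addition. -/
abbrev BC : Type := ℂ × ℂ

noncomputable section

/-- Bicomplex multiplication: `(z₁,z₂)·(w₁,w₂) = (z₁w₁ − z₂w₂, z₁w₂ + z₂w₁)`. -/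
def bcMul (z w : BC) : BC := (z.1 * w.1 - z.2 * w.2, z.1 * w.2 + z.2 * w.1)

/-- The `*`-conjugate `Z* = conj z₁ − j conj z₂`. -/
def bcStar (z : BC) : BC := ((starRingEnd ℂ) z.1, -((starRingEnd ℂ) z.2))

/-- First idempotent component `λ₁ = z₁ − i z₂`. -/
def idem1 (z : BC) : ℂ := z.1 - Complex.I * z.2

/-- Second idempotent component `λ₂ = z₁ + i z₂`. -/
def idem2 (z : BC) : ℂ := z.1 + Complex.I * z.2

/-- Membership in `𝔻⁺`: both idempotent components are nonnegative real numbers. -/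
def inDplus (z : BC) : Prop :=
  (idem1 z).im = 0 ∧ 0 ≤ (idem1 z).re ∧ (idem2 z).im = 0 ∧ 0 ≤ (idem2 z).re

/-- A bicomplex matrix `A = A₁ + j A₂` is a pair of complex matrices. -/
abbrev BCMat (I J : Type) : Type := Matrix I J ℂ × Matrix I J ℂ

/-- Bicomplex matrix multiplication, induced by bicomplex multiplication. -/
def bmul {I J K : Type} [Fintype J] (A : BCMat I J) (B : BCMat J K) : BCMat I K :=
  (A.1 * B.1 - A.2 * B.2, A.1 * B.2 + A.2 * B.1)

/-- `(A*)ᵗ`: the entrywise `*`-conjugate followed by transpose. -/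
def bcStarT {I J : Type} (A : BCMat I J) : BCMat J I := (A.1ᴴ, -(A.2ᴴ))

/-- The `(j,k)` entry of a bicomplex matrix, as a bicomplex number. -/
def bcEntry {I J : Type} (A : BCMat I J) (j : I) (k : J) : BC := (A.1 j k, A.2 j k)

/-- First idempotent component `𝒜₁ = A₁ − i A₂` of a bicomplex matrix. -/
def midem1 {I J : Type} (A : BCMat I J) : Matrix I J ℂ := A.1 - Complex.I • A.2

/-- Second idempotent component `𝒜₂ = A₁ + i A₂` of a bicomplex matrix. -/
def midem2 {I J : Type} (A : BCMat I J) : Matrix I J ℂ := A.1 + Complex.I • A.2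

/-- The bicomplex number `(c*)ᵗ · A · c`. -/
def quadForm {I : Type} [Fintype I] (A : BCMat I I) (c : I → BC) : BC :=
  ∑ j, ∑ k, bcMul (bcStar (c j)) (bcMul (bcEntry A j k) (c k))

/-- `A` is hyperbolic positive if `(c*)ᵗ · A · c ∈ 𝔻⁺` for every bicomplex vector `c`. -/
def HypPos {I : Type} [Fintype I] (A : BCMat I I) : Prop :=
  ∀ c : I → BC, inDplus (quadForm A c)

/-- Bicomplex trace `Tr(A) = Tr(A₁) + j Tr(A₂)`. -/
def bcTrace {I : Type} [Fintype I] (A : BCMat I I) : BC := (A.1.trace, A.2.trace)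

/-- The bicomplex tensor product
`A ⊗ⱼ B = (A₁⊗B₁ − A₂⊗B₂) + j (A₁⊗B₂ + A₂⊗B₁)`. -/
def bkron {I J K L : Type} (A : BCMat I J) (B : BCMat K L) : BCMat (I × K) (J × L) :=
  (A.1 ⊗ₖ B.1 - A.2 ⊗ₖ B.2, A.1 ⊗ₖ B.2 + A.2 ⊗ₖ B.1)

end


section Aux

open Finset

lemma aux_psd {n : Type} [Fintype n] [DecidableEq n] (M : Matrix n n ℂ)
    (h : ∀ x : n → ℂ, 0 ≤ star x ⬝ᵥ M *ᵥ x) : M.PosSemidef := by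
  refine PosSemidef.of_dotProduct_mulVec_nonneg ?_ h
  rw [Matrix.isHermitian_iff_isSymmetric, LinearMap.isSymmetric_iff_inner_map_self_real]
  rw [(WithLp.equiv 2 (n → ℂ)).symm.surjective.forall]
  intro x
  simp only [WithLp.equiv_symm_apply, toEuclideanLin_toLp, EuclideanSpace.inner_toLp_toLp, toLin'_apply,
    star_mulVec, dotProduct_mulVec]
  have hx := h x
  rw [Complex.nonneg_iff] at hx
  have key : star x ᵥ* Mᴴ ⬝ᵥ x = (starRingEnd ℂ) (star x ⬝ᵥ M *ᵥ x) := by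
    simp only [dotProduct, vecMul, mulVec, conjTranspose_apply, map_sum, _root_.map_mul,
      Pi.star_apply, RCLike.star_def, starRingEnd_self_apply, Finset.sum_mul, Finset.mul_sum]
    exact Finset.sum_congr rfl fun i _ => Finset.sum_congr rfl fun j _ => by ring
  rw [dotProduct_comm x]
  rw [key, Complex.conj_conj]
  exact ((Complex.conj_eq_iff_im).mpr hx.2.symm).symm

lemma aux_kron_psd {n m : Type} [Fintype n] [DecidableEq n] [Fintype m] [DecidableEq m]
    {M : Matrix n n ℂ} {N : Matrix m m ℂ} (hM : M.PosSemidef) (hN : N.PosSemidef) :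
    (M ⊗ₖ N).PosSemidef := by
  exact hM.kronecker hN

lemma idem1_bcMul (z w : BC) : idem1 (bcMul z w) = idem1 z * idem1 w := by
  simp only [idem1, bcMul]; linear_combination (-(z.2*w.2)) * Complex.I_sq

lemma idem2_bcMul (z w : BC) : idem2 (bcMul z w) = idem2 z * idem2 w := by
  simp only [idem2, bcMul]; linear_combination (-(z.2*w.2)) * Complex.I_sq

lemma idem1_bcStar (z : BC) : idem1 (bcStar z) = (starRingEnd ℂ) (idem1 z) := by
  simp only [idem1, bcStar, map_sub, _root_.map_mul, Complex.conj_I]; ring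

lemma idem2_bcStar (z : BC) : idem2 (bcStar z) = (starRingEnd ℂ) (idem2 z) := by
  simp only [idem2, bcStar, map_add, _root_.map_mul, Complex.conj_I]; ring

lemma idem1_sum {ι : Type*} (s : Finset ι) (f : ι → BC) :
    idem1 (∑ i ∈ s, f i) = ∑ i ∈ s, idem1 (f i) := by
  simp [idem1, Prod.fst_sum, Prod.snd_sum, Finset.mul_sum, Finset.sum_sub_distrib]

lemma idem2_sum {ι : Type*} (s : Finset ι) (f : ι → BC) :
    idem2 (∑ i ∈ s, f i) = ∑ i ∈ s, idem2 (f i) := by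
  simp [idem2, Prod.fst_sum, Prod.snd_sum, Finset.mul_sum, Finset.sum_add_distrib]

lemma quad_idem1 {I : Type} [Fintype I] (A : BCMat I I) (c : I → BC) :
    idem1 (quadForm A c) =
      star (fun i => idem1 (c i)) ⬝ᵥ (midem1 A) *ᵥ (fun i => idem1 (c i)) := by
  simp only [quadForm, idem1_sum, idem1_bcMul, idem1_bcStar, dotProduct, mulVec,
    Pi.star_apply, RCLike.star_def, Finset.mul_sum]
  refine Finset.sum_congr rfl fun j _ => Finset.sum_congr rfl fun k _ => ?_
  simp only [midem1, bcEntry, idem1, Matrix.sub_apply, Matrix.smul_apply, smul_eq_mul]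

lemma quad_idem2 {I : Type} [Fintype I] (A : BCMat I I) (c : I → BC) :
    idem2 (quadForm A c) =
      star (fun i => idem2 (c i)) ⬝ᵥ (midem2 A) *ᵥ (fun i => idem2 (c i)) := by
  simp only [quadForm, idem2_sum, idem2_bcMul, idem2_bcStar, dotProduct, mulVec,
    Pi.star_apply, RCLike.star_def, Finset.mul_sum]
  refine Finset.sum_congr rfl fun j _ => Finset.sum_congr rfl fun k _ => ?_
  simp only [midem2, bcEntry, idem2, Matrix.add_apply, Matrix.smul_apply, smul_eq_mul]

lemma midem1_bkron {n m : ℕ} (A : BCMat (Fin n) (Fin n)) (B : BCMat (Fin m) (Fin m)) :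
    midem1 (bkron A B) = midem1 A ⊗ₖ midem1 B := by
  ext ⟨i, k⟩ ⟨j, l⟩
  simp only [midem1, bkron, Matrix.sub_apply, Matrix.add_apply, Matrix.smul_apply,
    Matrix.kroneckerMap_apply, smul_eq_mul]
  linear_combination (-(A.2 i j * B.2 k l)) * Complex.I_sq

lemma midem2_bkron {n m : ℕ} (A : BCMat (Fin n) (Fin n)) (B : BCMat (Fin m) (Fin m)) :
    midem2 (bkron A B) = midem2 A ⊗ₖ midem2 B := by
  ext ⟨i, k⟩ ⟨j, l⟩
  simp only [midem2, bkron, Matrix.sub_apply, Matrix.add_apply, Matrix.smul_apply,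
    Matrix.kroneckerMap_apply, smul_eq_mul]
  linear_combination (-(A.2 i j * B.2 k l)) * Complex.I_sq

lemma hypPos_midem1_psd {n : ℕ} {A : BCMat (Fin n) (Fin n)} (hA : HypPos A) :
    (midem1 A).PosSemidef := by
  apply aux_psd
  intro x
  have h := hA (fun i => (x i, 0))
  obtain ⟨h1, h2, _, _⟩ := h
  rw [quad_idem1] at h1 h2
  have hx : (fun i => idem1 ((fun i => ((x i : ℂ), (0 : ℂ))) i)) = x := by
    funext i; simp [idem1]
  rw [hx] at h1 h2
  rw [Complex.nonneg_iff]
  exact ⟨h2, h1.symm⟩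

lemma hypPos_midem2_psd {n : ℕ} {A : BCMat (Fin n) (Fin n)} (hA : HypPos A) :
    (midem2 A).PosSemidef := by
  apply aux_psd
  intro x
  have h := hA (fun i => (x i, 0))
  obtain ⟨_, _, h1, h2⟩ := h
  rw [quad_idem2] at h1 h2
  have hx : (fun i => idem2 ((fun i => ((x i : ℂ), (0 : ℂ))) i)) = x := by
    funext i; simp [idem2]
  rw [hx] at h1 h2
  rw [Complex.nonneg_iff]
  exact ⟨h2, h1.symm⟩

end Aux

noncomputable section

/-- the bicomplex tensor product of hyperbolic positive matrices
is hyperbolic positive. -/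
theorem bkron_hypPos {n m : ℕ} (A : BCMat (Fin n) (Fin n)) (B : BCMat (Fin m) (Fin m))
    (hA : HypPos A) (hB : HypPos B) : HypPos (bkron A B) := by
  have h1 := aux_kron_psd (hypPos_midem1_psd hA) (hypPos_midem1_psd hB)
  have h2 := aux_kron_psd (hypPos_midem2_psd hA) (hypPos_midem2_psd hB)
  rw [← midem1_bkron] at h1
  rw [← midem2_bkron] at h2
  intro c
  have q1 := h1.dotProduct_mulVec_nonneg (fun i => idem1 (c i))
  have q2 := h2.dotProduct_mulVec_nonneg (fun i => idem2 (c i))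
  rw [Complex.nonneg_iff] at q1 q2
  rw [← quad_idem1] at q1
  rw [← quad_idem2] at q2
  exact ⟨q1.2.symm, q1.1, q2.2.symm, q2.1⟩

end
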